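/- Let (X, ρ) be a metric space, λ ∈ Δ∞, and x = (x_k)_{k∈ℕ} a sequence in X. Let C be a compact subset of X such that C ∩ Γ_x(λ) = ∅, where Γ_x(λ) is the set of λ-statistical cluster points of x. Then the set G = {k ∈ ℕ : x_k ∈ C} has λ-density zero. (This is the paper's Theorem 4.5, specialized to the PM space induced by a metric, where F_{xy} = ε_{ρ(x,y)} and the strong topology is the metric topology.) -/
import Mathlib


open Filter Topology

/-- `l` belongs to the class `Δ∞`: a nondecreasing (for indices `≥ 1`) sequence of
positive reals tending to `∞` with `l 1 = 1` and `l (n+1) ≤ l n + 1`. -/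
def DeltaInfty (l : ℕ → ℝ) : Prop :=
  (∀ n, 1 ≤ n → 0 < l n) ∧ (∀ m n, 1 ≤ m → m ≤ n → l m ≤ l n) ∧
    Tendsto l atTop atTop ∧ l 1 = 1 ∧ ∀ n, 1 ≤ n → l (n + 1) ≤ l n + 1

open Classical in
/-- The number of elements of `M` in the window `I_n = [n - l n + 1, n] ∩ ℕ`. -/
noncomputable def lamCount (l : ℕ → ℝ) (M : Set ℕ) (n : ℕ) : ℕ :=
  ((Finset.Icc 1 n).filter (fun (k : ℕ) => ((n : ℝ) - l n + 1 ≤ (k : ℝ)) ∧ k ∈ M)).card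

/-- `M ⊆ ℕ` has `λ`-density `r`: `|{k ∈ I_n : k ∈ M}| / l n → r`. -/
def lamDensity (l : ℕ → ℝ) (M : Set ℕ) (r : ℝ) : Prop :=
  Tendsto (fun n => (lamCount l M n : ℝ) / l n) atTop (𝓝 r)

/-- `Y` is a `λ`-statistical cluster point of `x`: for every `t > 0` the set
`{k : dist (x k) Y < t}` does not have `λ`-density zero. -/
def LamStatClusterPt {X : Type*} [MetricSpace X] (l : ℕ → ℝ) (x : ℕ → X) (Y : X) : Prop :=
  ∀ t > 0, ¬ lamDensity l {k | dist (x k) Y < t} 0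

lemma lamCount_mono (l : ℕ → ℝ) {M N : Set ℕ} (h : M ⊆ N) (n : ℕ) :
    lamCount l M n ≤ lamCount l N n := by
  classical
  apply Finset.card_le_card
  intro k hk
  simp only [lamCount, Finset.mem_filter] at *
  exact ⟨hk.1, hk.2.1, h hk.2.2⟩

lemma lamCount_union_le (l : ℕ → ℝ) (M N : Set ℕ) (n : ℕ) :
    lamCount l (M ∪ N) n ≤ lamCount l M n + lamCount l N n := by
  classical
  simp only [lamCount]
  refine le_trans (Finset.card_le_card ?_) (Finset.card_union_le _ _)
  intro k hk
  simp only [Finset.mem_filter, Finset.mem_union, Set.mem_union] at hk ⊢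
  tauto

lemma lamCount_biUnion_le {ι : Type*} (l : ℕ → ℝ) (s : Finset ι) (M : ι → Set ℕ) (n : ℕ) :
    lamCount l (⋃ i ∈ s, M i) n ≤ ∑ i ∈ s, lamCount l (M i) n := by
  classical
  induction s using Finset.induction with
  | empty => simp [lamCount]
  | @insert a s ha ih =>
    rw [Finset.sum_insert ha, Finset.set_biUnion_insert]
    have h1 := lamCount_union_le l (M a) (⋃ i ∈ s, M i) n
    omega

theorem lamDensity_zero_of_compact_disjoint_clusterPts {X : Type*} [MetricSpace X]
    (l : ℕ → ℝ) (hl : DeltaInfty l) (x : ℕ → X) (C : Set X)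
    (hC : IsCompact C) (hdisj : C ∩ {Y | LamStatClusterPt l x Y} = ∅) :
    lamDensity l {k | x k ∈ C} 0 := by
  classical
  have hne : ∀ Y ∈ C, ∃ t > 0, lamDensity l {k | dist (x k) Y < t} 0 := by
    intro Y hY
    have hnc : ¬ LamStatClusterPt l x Y := by
      intro h
      have : Y ∈ C ∩ {Y | LamStatClusterPt l x Y} := ⟨hY, h⟩
      rw [hdisj] at this
      exact this
    unfold LamStatClusterPt at hnc
    push_neg at hnc
    obtain ⟨t, ht, h2⟩ := hnc
    exact ⟨t, ht, h2⟩
  choose t ht hden using hne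
  have hcov : C ⊆ ⋃ Y : C, Metric.ball (Y : X) (t Y Y.2) := by
    intro Y hY
    exact Set.mem_iUnion.mpr ⟨⟨Y, hY⟩, Metric.mem_ball_self (ht Y hY)⟩
  obtain ⟨s, hs⟩ := hC.elim_finite_subcover (fun Y : C => Metric.ball (Y : X) (t Y Y.2))
    (fun _ => Metric.isOpen_ball) hcov
  set M : C → Set ℕ := fun i => {k | dist (x k) (i : X) < t i i.2} with hM
  have hG : {k | x k ∈ C} ⊆ ⋃ i ∈ s, M i := by
    intro k hk
    obtain ⟨i, hi, hki⟩ := Set.mem_iUnion₂.mp (hs hk)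
    exact Set.mem_iUnion₂.mpr ⟨i, hi, by simpa [hM, Metric.mem_ball] using hki⟩
  have hsum : Tendsto (fun n => ∑ i ∈ s, (lamCount l (M i) n : ℝ) / l n) atTop (𝓝 0) := by
    have h := tendsto_finset_sum s (fun (i : C) (_ : i ∈ s) => hden i i.2)
    simpa using h
  refine squeeze_zero' ?_ ?_ hsum
  · filter_upwards [eventually_ge_atTop 1] with n hn
    exact div_nonneg (Nat.cast_nonneg _) (le_of_lt (hl.1 n hn))
  · filter_upwards [eventually_ge_atTop 1] with n hn
    have hlpos := hl.1 n hn
    rw [← Finset.sum_div]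
    have hcount : (lamCount l {k | x k ∈ C} n : ℝ) ≤ ∑ i ∈ s, (lamCount l (M i) n : ℝ) := by
      have h1 := (lamCount_mono l hG n).trans (lamCount_biUnion_le l s M n)
      exact_mod_cast h1
    exact div_le_div_of_nonneg_right hcount hlpos.le |>.trans_eq rfl
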